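/- Let L and M be complementary subspaces of ℂ^m (i.e. L + M = ℂ^m and L ∩ M = {0}). Then P_{L,M} = P_L (P_{M⊥} P_L)† P_{M⊥} and also P_{L,M} = (P_{M⊥} P_L)†, where M⊥ denotes the orthogonal complement of M. -/

import Mathlib

open Matrix

/-- The four Penrose conditions characterizing the Moore-Penrose inverse. -/
def IsMoorePenrose {m n : ℕ} (A : Matrix (Fin m) (Fin n) ℂ)
    (X : Matrix (Fin n) (Fin m) ℂ) : Prop :=
  A * X * A = A ∧ X * A * X = X ∧ (A * X)ᴴ = A * X ∧ (X * A)ᴴ = X * A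

/-- The range (column space) of a matrix, as a subspace of Euclidean space. -/
noncomputable def mrange {m n : ℕ} (A : Matrix (Fin m) (Fin n) ℂ) :
    Submodule ℂ (EuclideanSpace ℂ (Fin m)) :=
  LinearMap.range (Matrix.toEuclideanLin A)

/-- The null space of a matrix, as a subspace of Euclidean space. -/
noncomputable def mker {m n : ℕ} (A : Matrix (Fin m) (Fin n) ℂ) :
    Submodule ℂ (EuclideanSpace ℂ (Fin n)) :=
  LinearMap.ker (Matrix.toEuclideanLin A)

lemma teL_mul {m : ℕ} (A B : Matrix (Fin m) (Fin m) ℂ) (x : EuclideanSpace ℂ (Fin m)) :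
    Matrix.toEuclideanLin (A * B) x =
      Matrix.toEuclideanLin A (Matrix.toEuclideanLin B x) := by
  have := Matrix.toLin_mul (PiLp.basisFun 2 ℂ (Fin m)) (PiLp.basisFun 2 ℂ (Fin m))
    (PiLp.basisFun 2 ℂ (Fin m)) A B
  rw [Matrix.toEuclideanLin_eq_toLin, this]
  rfl

/-- If `A` is idempotent and the range of `B` lies in the range of `A`, then `A * B = B`. -/
lemma idem_absorb {m : ℕ} {A B : Matrix (Fin m) (Fin m) ℂ}
    (hA : A * A = A) (h : mrange B ≤ mrange A) : A * B = B := by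
  apply Matrix.toEuclideanLin.injective
  apply LinearMap.ext; intro x
  rw [teL_mul]
  obtain ⟨y, hy⟩ := h (LinearMap.mem_range_self _ x)
  rw [← hy, ← teL_mul, hA]

/-- If the range of `B` lies in the kernel of `A`, then `A * B = 0`. -/
lemma range_le_ker_zero {m : ℕ} {A B : Matrix (Fin m) (Fin m) ℂ}
    (h : mrange B ≤ mker A) : A * B = 0 := by
  apply Matrix.toEuclideanLin.injective
  apply LinearMap.ext; intro x
  rw [teL_mul]
  have := h (LinearMap.mem_range_self _ x)
  simpa [mker] using this

/-- Conversely, if `A * B = 0`, the range of `B` lies in the kernel of `A`. -/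
lemma zero_range_le {m : ℕ} {A B : Matrix (Fin m) (Fin m) ℂ}
    (h : A * B = 0) : mrange B ≤ mker A := by
  rintro _ ⟨x, rfl⟩
  have : Matrix.toEuclideanLin A (Matrix.toEuclideanLin B x) = 0 := by
    rw [← teL_mul, h]
    simp
  simpa [mker] using this

/-- The kernel of a symmetric linear map is the orthogonal of its range. -/
lemma sym_ker {E : Type*} [NormedAddCommGroup E] [InnerProductSpace ℂ E]
    {f : E →ₗ[ℂ] E} (hsym : f.IsSymmetric) :
    LinearMap.ker f = (LinearMap.range f)ᗮ := by
  ext x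
  simp only [LinearMap.mem_ker, Submodule.mem_orthogonal]
  constructor
  · rintro hx u ⟨y, rfl⟩
    rw [hsym y, hx, inner_zero_right]
  · intro hx
    have h1 : inner ℂ (f x) (f x) = (0 : ℂ) := by
      rw [hsym x]
      exact inner_eq_zero_symm.mp (hx _ (LinearMap.mem_range_self _ _))
    exact inner_self_eq_zero.mp h1

/-- The kernel of a Hermitian matrix is the orthogonal complement of its range. -/
lemma herm_ker {m : ℕ} {A : Matrix (Fin m) (Fin m) ℂ} (hA : Aᴴ = A) :
    mker A = (mrange A)ᗮ :=
  sym_ker (Matrix.isHermitian_iff_isSymmetric.mp hA)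

/-- Uniqueness of the Moore-Penrose inverse. -/
lemma mp_unique {k : ℕ} {A X Y : Matrix (Fin k) (Fin k) ℂ}
    (hX : IsMoorePenrose A X) (hY : IsMoorePenrose A Y) : X = Y := by
  obtain ⟨x1, x2, x3, x4⟩ := hX
  obtain ⟨y1, y2, y3, y4⟩ := hY
  have h1 : A * X = A * Y := by
    calc A * X = (A * X)ᴴ := x3.symm
      _ = ((A * Y) * (A * X))ᴴ := by
          rw [show (A * Y) * (A * X) = (A * Y * A) * X from by simp only [mul_assoc], y1]
      _ = (A * X)ᴴ * (A * Y)ᴴ := by rw [Matrix.conjTranspose_mul]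
      _ = (A * X) * (A * Y) := by rw [x3, y3]
      _ = (A * X * A) * Y := by simp only [mul_assoc]
      _ = A * Y := by rw [x1]
  have h2 : X * A = Y * A := by
    calc X * A = X * (A * Y * A) := by rw [y1]
      _ = (X * A) * (Y * A) := by simp only [mul_assoc]
      _ = (X * A)ᴴ * (Y * A)ᴴ := by rw [x4, y4]
      _ = ((Y * A) * (X * A))ᴴ := (Matrix.conjTranspose_mul _ _).symm
      _ = (Y * (A * X * A))ᴴ := by simp only [mul_assoc]
      _ = (Y * A)ᴴ := by rw [x1]
      _ = Y * A := y4
  calc X = X * A * X := x2.symm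
    _ = X * (A * X) := by rw [mul_assoc]
    _ = X * (A * Y) := by rw [h1]
    _ = (X * A) * Y := by rw [mul_assoc]
    _ = (Y * A) * Y := by rw [h2]
    _ = Y := y2

/-- Greville: For complementary subspaces `L`, `M` of `ℂ^m`, the oblique
projector `P_{L,M}` satisfies `P_{L,M} = P_L (P_{M⊥} P_L)† P_{M⊥} = (P_{M⊥} P_L)†`, where
`P_L` (resp. `P_{M⊥}`) is the orthogonal projector onto `L` (resp. `M⊥`). -/
theorem stmt1 {m : ℕ} (L M : Submodule ℂ (EuclideanSpace ℂ (Fin m)))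
    (hsum : L ⊔ M = ⊤) (hint : L ⊓ M = ⊥)
    (PLM : Matrix (Fin m) (Fin m) ℂ)
    (hPLM : PLM * PLM = PLM ∧ mrange PLM = L ∧ mker PLM = M)
    (PL : Matrix (Fin m) (Fin m) ℂ)
    (hPL : PL * PL = PL ∧ PLᴴ = PL ∧ mrange PL = L)
    (PMp : Matrix (Fin m) (Fin m) ℂ)
    (hPMp : PMp * PMp = PMp ∧ PMpᴴ = PMp ∧ mrange PMp = Mᗮ)
    (D : Matrix (Fin m) (Fin m) ℂ) (hD : IsMoorePenrose (PMp * PL) D) :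
    PLM = PL * D * PMp ∧ PLM = D := by
  obtain ⟨hP2, hPr, hPk⟩ := hPLM
  obtain ⟨hL2, hLh, hLr⟩ := hPL
  obtain ⟨hM2, hMh, hMr⟩ := hPMp
  -- kernel of PMp is M
  have hMk : mker PMp = M := by
    rw [herm_ker hMh, hMr, Submodule.orthogonal_orthogonal]
  -- PL * PLM = PLM
  have f1 : PL * PLM = PLM := idem_absorb hL2 (le_of_eq (by rw [hPr, hLr]))
  -- PLM * PL = PL
  have f2 : PLM * PL = PL := idem_absorb hP2 (le_of_eq (by rw [hLr, hPr]))
  -- PMp * PLM = PMp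
  have f3 : PMp * PLM = PMp := by
    have hr : mrange (1 - PLM) ≤ mker PMp := by
      refine le_trans (zero_range_le (A := PLM) ?_) (le_of_eq (by rw [hPk, hMk]))
      rw [mul_sub, mul_one, hP2, sub_self]
    have h0 : PMp * (1 - PLM) = 0 := range_le_ker_zero hr
    rw [mul_sub, mul_one, sub_eq_zero] at h0
    exact h0.symm
  -- PLM * PMp = PLM
  have f4 : PLM * PMp = PLM := by
    have hr : mrange (1 - PMp) ≤ mker PLM := by
      refine le_trans (zero_range_le (A := PMp) ?_) (le_of_eq (by rw [hMk, hPk]))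
      rw [mul_sub, mul_one, hM2, sub_self]
    have h0 : PLM * (1 - PMp) = 0 := range_le_ker_zero hr
    rw [mul_sub, mul_one, sub_eq_zero] at h0
    exact h0.symm
  -- PLM is a Moore-Penrose inverse of PMp * PL
  have hAX : (PMp * PL) * PLM = PMp := by rw [mul_assoc, f1, f3]
  have hXA : PLM * (PMp * PL) = PL := by rw [← mul_assoc, f4, f2]
  have hMP : IsMoorePenrose (PMp * PL) PLM := by
    refine ⟨?_, ?_, ?_, ?_⟩
    · rw [hAX, ← mul_assoc, hM2]
    · rw [hXA, f1]
    · rw [hAX, hMh]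
    · rw [hXA, hLh]
  have hDX : D = PLM := mp_unique hD hMP
  refine ⟨?_, hDX.symm⟩
  rw [hDX, f1, f4]
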